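/- Let t be a linear term and s = C[tδ] a term containing an occurrence of t at the hole position π₁ of context C, where π₁ is an innermost occurrence among a maximal set of pairwise non-overlapping occurrences of t in s. If u is any term with the same variables constraints (V(u) ⊆ V(t)), then maxNO(t, C[uδ]) ≥ maxNO(t, u) + maxNO(t, s) − 1. -/

import Mathlib

inductive Tm (S V : Type) : Type
  | var : V → Tm S V
  | app : S → List (Tm S V) → Tm S V

namespace Tm
variable {S V : Type}

def subst (σ : V → Tm S V) : Tm S V → Tm S V
  | var x => σ x
  | app f ts => app f (ts.attach.map fun u => subst σ u.1)
decreasing_by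
  have := List.sizeOf_lt_of_mem u.2
  simp only [Tm.app.sizeOf_spec]
  omega

inductive Occurs (x : V) : Tm S V → Prop
  | var : Occurs x (var x)
  | app {f : S} {ts : List (Tm S V)} {t : Tm S V} :
      t ∈ ts → Occurs x t → Occurs x (app f ts)

def iter (σ : V → Tm S V) (n : ℕ) (t : Tm S V) : Tm S V :=
  (subst σ)^[n] t

/-- The subterm of `t` at position `π`, if `π` is a position of `t`. -/
def subtermAt : Tm S V → List ℕ → Option (Tm S V)
  | t, [] => some t
  | var _, _ :: _ => none
  | app _ [], _ :: _ => none
  | app _ (u :: _), 0 :: π => subtermAt u π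
  | app f (_ :: ts), (i + 1) :: π => subtermAt (app f ts) (i :: π)

/-- `t` matches `s` at position `π`. -/
def Matches (t s : Tm S V) (π : List ℕ) : Prop :=
  ∃ σ : V → Tm S V, subtermAt s π = some (subst σ t)

/-- `π` is a non-variable (function symbol) position of `t`. -/
def IsAppPos (t : Tm S V) (π : List ℕ) : Prop :=
  ∃ (f : S) (ts : List (Tm S V)), subtermAt t π = some (app f ts)

/-- `π₁` and `π₂` are overlapping w.r.t. `t`. -/
def Overlap (t : Tm S V) (π₁ π₂ : List ℕ) : Prop :=
  ∃ τ, IsAppPos t τ ∧ (π₁ = π₂ ++ τ ∨ π₂ = π₁ ++ τ)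

/-- `Sset` is a set of pairwise non-overlapping occurrences of `t` in `s`. -/
def NOSet (t s : Tm S V) (Sset : Finset (List ℕ)) : Prop :=
  (∀ π ∈ Sset, Matches t s π) ∧
  (∀ π₁ ∈ Sset, ∀ π₂ ∈ Sset, π₁ ≠ π₂ → ¬ Overlap t π₁ π₂)

/-- Maximal number of pairwise non-overlapping occurrences of `t` in `s`. -/
noncomputable def maxNO (t s : Tm S V) : ℕ :=
  sSup {n | ∃ Sset : Finset (List ℕ), NOSet t s Sset ∧ Sset.card = n}

mutual
  /-- Replace the subterm of `t` at position `π` by `r`. -/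
  def replaceAt : Tm S V → List ℕ → Tm S V → Tm S V
    | _, [], r => r
    | var x, _ :: _, _ => var x
    | app f ts, i :: π, r => app f (replaceArg ts i π r)
  def replaceArg : List (Tm S V) → ℕ → List ℕ → Tm S V → List (Tm S V)
    | [], _, _, _ => []
    | u :: ts, 0, π, r => replaceAt u π r :: ts
    | u :: ts, i + 1, π, r => u :: replaceArg ts i π r
end

/-- The number of positions of a term. -/
def size : Tm S V → ℕ
  | var _ => 1
  | app _ [] => 1
  | app f (u :: ts) => size u + size (app f ts)

/-- The list of variable positions of a term. -/
def varPositions : Tm S V → List (List ℕ)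
  | var _ => [[]]
  | app _ [] => []
  | app f (u :: ts) =>
      (varPositions u).map (0 :: ·) ++
      (varPositions (app f ts)).map
        (fun π => match π with | i :: π' => (i + 1) :: π' | [] => [])

/-- `t` is linear: every variable occurs at most once. -/
def Linear (t : Tm S V) : Prop :=
  ∀ (x : V) (π₁ π₂ : List ℕ), subtermAt t π₁ = some (var x) →
    subtermAt t π₂ = some (var x) → π₁ = π₂

end Tm
namespace Tm
variable {S V : Type}

theorem my_ind {motive : Tm S V → Prop} (hv : ∀ x, motive (var x))
    (ha : ∀ f ts, (∀ u ∈ ts, motive u) → motive (app f ts)) : ∀ t, motive t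
  | var x => hv x
  | app f ts => ha f ts (fun u hu => my_ind hv ha u)
decreasing_by
  have := List.sizeOf_lt_of_mem hu
  simp only [Tm.app.sizeOf_spec]
  omega

theorem subst_app (σ : V → Tm S V) (f : S) (ts : List (Tm S V)) :
    subst σ (app f ts) = app f (ts.map (subst σ)) := by
  rw [subst]
  congr 1
  exact List.attach_map_val (l := ts) (f := subst σ)

theorem subtermAt_idx (f : S) : ∀ (ts : List (Tm S V)) (i : ℕ) (π : List ℕ),
    subtermAt (app f ts) (i :: π) = (ts[i]?).bind (fun w => subtermAt w π)
  | [], _, _ => by simp [subtermAt]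
  | u :: ts, 0, π => by simp [subtermAt]
  | u :: ts, i+1, π => by
      rw [show subtermAt (app f (u :: ts)) ((i+1) :: π) = subtermAt (app f ts) (i :: π) by
          simp [subtermAt], subtermAt_idx f ts i π]
      simp

theorem subtermAt_append : ∀ (w : Tm S V) (a b : List ℕ),
    subtermAt w (a ++ b) = (subtermAt w a).bind (fun v => subtermAt v b) := by
  intro w a
  induction w, a using subtermAt.induct with
  | case1 t => simp [subtermAt]
  | case2 x h l => simp [subtermAt]
  | case3 f h l => simp [subtermAt]
  | case4 f u ts π ih => intro b; simpa [subtermAt] using ih b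
  | case5 f u ts i π ih => intro b; simpa [subtermAt] using ih b

/-- All positions of a term. -/
def allPos : Tm S V → List (List ℕ)
  | var _ => [[]]
  | app _ [] => [[]]
  | app f (u :: ts) =>
      [] :: ((allPos u).map (0 :: ·) ++
        (allPos (app f ts)).map (fun π => match π with | i :: γ => (i+1) :: γ | [] => []))
decreasing_by all_goals (simp only [Tm.app.sizeOf_spec, List.cons.sizeOf_spec]; omega)

theorem nil_mem_allPos : ∀ w : Tm S V, [] ∈ allPos w
  | var _ => by simp [allPos]
  | app _ [] => by simp [allPos]
  | app _ (_ :: _) => by simp [allPos]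

theorem mem_allPos : ∀ (w : Tm S V) (π : List ℕ) (v : Tm S V),
    subtermAt w π = some v → π ∈ allPos w := by
  intro w π
  induction w, π using subtermAt.induct with
  | case1 t => intro v _; exact nil_mem_allPos t
  | case2 x h l => simp [subtermAt]
  | case3 f h l => simp [subtermAt]
  | case4 f u ts π ih =>
      intro v hv
      simp only [subtermAt] at hv
      simp only [allPos, List.mem_cons, List.mem_append, List.mem_map]
      exact Or.inr (Or.inl ⟨π, ih v hv, rfl⟩)
  | case5 f u ts i π ih =>
      intro v hv
      rw [show subtermAt (app f (u :: ts)) ((i+1) :: π) = subtermAt (app f ts) (i :: π) by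
        simp [subtermAt]] at hv
      simp only [allPos, List.mem_cons, List.mem_append, List.mem_map]
      exact Or.inr (Or.inr ⟨i :: π, ih v hv, rfl⟩)

theorem subtermAt_subst (σ : V → Tm S V) : ∀ (w : Tm S V) (π : List ℕ) (v : Tm S V),
    subtermAt w π = some v → subtermAt (subst σ w) π = some (subst σ v) := by
  intro w π
  induction w, π using subtermAt.induct with
  | case1 t => intro v hv; simp [subtermAt] at hv; subst hv; simp [subtermAt]
  | case2 x h l => simp [subtermAt]
  | case3 f h l => simp [subtermAt]
  | case4 f u ts π ih =>
      intro v hv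
      simp only [subtermAt] at hv
      rw [subst_app]
      simpa [subtermAt] using ih v hv
  | case5 f u ts i π ih =>
      intro v hv
      rw [show subtermAt (app f (u :: ts)) ((i+1) :: π) = subtermAt (app f ts) (i :: π) by
        simp [subtermAt]] at hv
      have := ih v hv
      rw [subst_app] at this ⊢
      rw [subtermAt_idx] at this ⊢
      simpa using this

theorem subst_subst (δ σ : V → Tm S V) (w : Tm S V) :
    subst δ (subst σ w) = subst (fun x => subst δ (σ x)) w := by
  induction w using my_ind with
  | hv x => simp [subst]
  | ha f ts ih =>
      rw [subst_app, subst_app, subst_app, List.map_map]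
      congr 1
      exact List.map_congr_left (fun u hu => ih u hu)

theorem subst_congr (σ σ' : V → Tm S V) (w : Tm S V)
    (h : ∀ π x, subtermAt w π = some (var x) → σ x = σ' x) :
    subst σ w = subst σ' w := by
  induction w using my_ind with
  | hv x => simpa [subst] using h [] x (by simp [subtermAt])
  | ha f ts ih =>
      rw [subst_app, subst_app]
      congr 1
      refine List.map_congr_left (fun u hu => ih u hu ?_)
      intro π x hx
      obtain ⟨i, hi⟩ := List.mem_iff_getElem?.1 hu
      refine h (i :: π) x ?_
      rw [subtermAt_idx]
      rw [hi]
      simpa using hx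

theorem subtermAt_replaceAt_append (r : Tm S V) (ρ : List ℕ) :
    ∀ (s : Tm S V) (π : List ℕ) (w : Tm S V), subtermAt s π = some w →
    subtermAt (replaceAt s π r) (π ++ ρ) = subtermAt r ρ := by
  intro s π
  induction s, π using subtermAt.induct with
  | case1 t => intro w _; simp [replaceAt]
  | case2 x h l => simp [subtermAt]
  | case3 f h l => simp [subtermAt]
  | case4 f u ts π ih =>
      intro w hw
      simp only [subtermAt] at hw
      simp only [replaceAt, replaceArg, List.cons_append, subtermAt]
      exact ih w hw
  | case5 f u ts i π ih =>
      intro w hw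
      rw [show subtermAt (app f (u :: ts)) ((i+1) :: π) = subtermAt (app f ts) (i :: π) by
        simp [subtermAt]] at hw
      have := ih w hw
      simp only [replaceAt, List.cons_append] at this ⊢
      simp only [replaceArg]
      rw [show subtermAt (app f (u :: replaceArg ts i π r)) ((i+1) :: (π ++ ρ))
          = subtermAt (app f (replaceArg ts i π r)) (i :: (π ++ ρ)) by simp [subtermAt]]
      exact this

theorem subtermAt_replaceAt_prefix (r : Tm S V) (τ : List ℕ) :
    ∀ (s : Tm S V) (π : List ℕ) (w : Tm S V), subtermAt s π = some w →
    subtermAt (replaceAt s (π ++ τ) r) π = some (replaceAt w τ r) := by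
  intro s π
  induction s, π using subtermAt.induct with
  | case1 t => intro w hw; simp [subtermAt] at hw ⊢; rw [hw]
  | case2 x h l => simp [subtermAt]
  | case3 f h l => simp [subtermAt]
  | case4 f u ts π ih =>
      intro w hw
      simp only [subtermAt] at hw
      simp only [List.cons_append, replaceAt, replaceArg, subtermAt]
      exact ih w hw
  | case5 f u ts i π ih =>
      intro w hw
      rw [show subtermAt (app f (u :: ts)) ((i+1) :: π) = subtermAt (app f ts) (i :: π) by
        simp [subtermAt]] at hw
      have := ih w hw
      simp only [List.cons_append, replaceAt, replaceArg] at this ⊢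
      rw [show subtermAt (app f (u :: replaceArg ts i (π ++ τ) r)) (i.succ :: π)
          = subtermAt (app f (replaceArg ts i (π ++ τ) r)) (i :: π) by simp [subtermAt]]
      exact this

theorem replaceArg_getElem?_ne (r : Tm S V) (γ : List ℕ) :
    ∀ (ts : List (Tm S V)) (i j : ℕ), i ≠ j →
    (replaceArg ts i γ r)[j]? = ts[j]?
  | [], i, j, _ => by simp [replaceArg]
  | u :: ts, 0, 0, h => absurd rfl h
  | u :: ts, 0, j+1, _ => by simp [replaceArg]
  | u :: ts, i+1, 0, _ => by simp [replaceArg]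
  | u :: ts, i+1, j+1, h => by
      simp only [replaceArg, List.getElem?_cons_succ]
      exact replaceArg_getElem?_ne r γ ts i j (by omega)

theorem subtermAt_replaceAt_sibling (r : Tm S V) {a b : ℕ} (hab : a ≠ b)
    (γa γb : List ℕ) (w : Tm S V) :
    subtermAt (replaceAt w (a :: γa) r) (b :: γb) = subtermAt w (b :: γb) := by
  cases w with
  | var x => rw [show replaceAt (var x) (a :: γa) r = var x from by rw [replaceAt]]
  | app f ts =>
      rw [show replaceAt (app f ts) (a :: γa) r = app f (replaceArg ts a γa r) from by rw [replaceAt]]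
      rw [subtermAt_idx, subtermAt_idx, replaceArg_getElem?_ne r γa ts a b hab]

theorem subtermAt_replaceAt_parallel (r : Tm S V) {a b : ℕ} (hab : a ≠ b)
    (c γa γb : List ℕ) (s w : Tm S V) (hw : subtermAt s c = some w) :
    subtermAt (replaceAt s (c ++ a :: γa) r) (c ++ b :: γb) = subtermAt s (c ++ b :: γb) := by
  have h1 := subtermAt_replaceAt_prefix r (a :: γa) s c w hw
  rw [subtermAt_append, h1, subtermAt_append, hw]
  simpa using subtermAt_replaceAt_sibling r hab γa γb w

/-- Decomposition of positions of a substituted term. -/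
theorem subtermAt_subst_cases (σ : V → Tm S V) :
    ∀ (w : Tm S V) (π : List ℕ) (v : Tm S V), subtermAt (subst σ w) π = some v →
    (∃ w', subtermAt w π = some w' ∧ v = subst σ w') ∨
    (∃ a b x, π = a ++ b ∧ subtermAt w a = some (var x) ∧ subtermAt (σ x) b = some v) := by
  intro w π
  induction w, π using subtermAt.induct with
  | case1 t => intro v hv; simp [subtermAt] at hv ⊢; exact Or.inl hv.symm
  | case2 x h l =>
      intro v hv
      exact Or.inr ⟨[], h :: l, x, rfl, by simp [subtermAt], by simpa [subst] using hv⟩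
  | case3 f h l =>
      intro v hv
      rw [subst_app] at hv
      simp [subtermAt] at hv
  | case4 f u ts π ih =>
      intro v hv
      rw [subst_app] at hv
      simp only [List.map_cons, subtermAt] at hv
      rcases ih v hv with ⟨w', h1, h2⟩ | ⟨a, b, x, h1, h2, h3⟩
      · exact Or.inl ⟨w', by simpa [subtermAt] using h1, h2⟩
      · exact Or.inr ⟨0 :: a, b, x, by simp [h1], by simpa [subtermAt] using h2, h3⟩
  | case5 f u ts i π ih =>
      intro v hv
      rw [subst_app] at hv
      rw [show subtermAt (app f ((u :: ts).map (subst σ))) ((i+1) :: π)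
          = subtermAt (app f (ts.map (subst σ))) (i :: π) by simp [subtermAt]] at hv
      rw [← subst_app] at hv
      rcases ih v hv with ⟨w', h1, h2⟩ | ⟨a, b, x, h1, h2, h3⟩
      · refine Or.inl ⟨w', ?_, h2⟩
        rw [show subtermAt (app f (u :: ts)) ((i+1) :: π) = subtermAt (app f ts) (i :: π) by
          simp [subtermAt]]
        exact h1
      · match a, h1 with
        | [], h1 => simp [subtermAt] at h2
        | j :: a', h1 =>
            simp only [List.cons_append, List.cons.injEq] at h1
            refine Or.inr ⟨(j+1) :: a', b, x, by simp [h1.1, h1.2], ?_, h3⟩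
            rw [show subtermAt (app f (u :: ts)) ((j+1) :: a') = subtermAt (app f ts) (j :: a') by
              simp [subtermAt]]
            exact h2

section Update
variable [DecidableEq V]

theorem replaceArg_map_subst (σ : V → Tm S V) (x : V) (r : Tm S V) (τ' γ : List ℕ) :
    ∀ (ts : List (Tm S V)) (i : ℕ),
    (∀ u ∈ ts, ∀ τ₀, (∀ π, subtermAt u π = some (var x) → π = τ₀) →
       subtermAt u τ₀ = some (var x) →
       replaceAt (subst σ u) (τ₀ ++ τ') r
         = subst (Function.update σ x (replaceAt (σ x) τ' r)) u) →
    (∀ j π w, ts[j]? = some w → subtermAt w π = some (var x) → j = i ∧ π = γ) →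
    (∃ w, ts[i]? = some w ∧ subtermAt w γ = some (var x)) →
    replaceArg (ts.map (subst σ)) i (γ ++ τ') r
      = ts.map (subst (Function.update σ x (replaceAt (σ x) τ' r))) := by
  intro ts
  induction ts with
  | nil => intro i _ _ hex; simp at hex
  | cons u ts ihl =>
      intro i ih Hu hex
      have congr_of_notmem : ∀ (w : Tm S V), (∀ π, subtermAt w π = some (var x) → False) →
          subst σ w = subst (Function.update σ x (replaceAt (σ x) τ' r)) w := by
        intro w hw
        refine subst_congr _ _ _ (fun π y hy => ?_)
        rcases eq_or_ne y x with rfl | hyx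
        · exact absurd hy (fun h => hw π h)
        · simp [Function.update_of_ne hyx]
      cases i with
      | zero =>
          obtain ⟨w, hw1, hw2⟩ := hex
          simp only [List.getElem?_cons_zero, Option.some.injEq] at hw1
          subst hw1
          simp only [List.map_cons, replaceArg, List.cons.injEq]
          constructor
          · exact ih u (by simp) γ
              (fun π hπ => (Hu 0 π u (by simp) hπ).2) hw2
          · refine List.map_congr_left (fun v hv => ?_)
            obtain ⟨j, hj⟩ := List.mem_iff_getElem?.1 hv
            exact congr_of_notmem v (fun π hπ => by
              have := (Hu (j+1) π v (by simpa using hj) hπ).1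
              omega)
      | succ i =>
          simp only [List.map_cons, replaceArg, List.cons.injEq]
          constructor
          · exact congr_of_notmem u (fun π hπ => by
              have := (Hu 0 π u (by simp) hπ).1
              omega)
          · refine ihl i (fun v hv => ih v (by simp [hv])) ?_ ?_
            · intro j π w hj hπ
              have := Hu (j+1) π w (by simpa using hj) hπ
              exact ⟨by omega, this.2⟩
            · obtain ⟨w, hw1, hw2⟩ := hex
              exact ⟨w, by simpa using hw1, hw2⟩

theorem replace_subst_var (σ : V → Tm S V) (x : V) (r : Tm S V) (τ' : List ℕ) :
    ∀ (t : Tm S V) (τ₀ : List ℕ),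
    (∀ π, subtermAt t π = some (var x) → π = τ₀) →
    subtermAt t τ₀ = some (var x) →
    replaceAt (subst σ t) (τ₀ ++ τ') r
      = subst (Function.update σ x (replaceAt (σ x) τ' r)) t := by
  intro t
  induction t using my_ind with
  | hv y =>
      intro τ₀ huniq hpos
      match τ₀, hpos with
      | [], hpos =>
          have hxy : y = x := by simpa [subtermAt] using hpos
          subst hxy
          simp [subst, Function.update_self]
      | (_ :: _), hpos => simp [subtermAt] at hpos
  | ha f ts ih =>
      intro τ₀ huniq hpos
      match τ₀, hpos with
      | [], hpos => simp [subtermAt] at hpos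
      | i :: γ, hpos =>
          rw [subtermAt_idx] at hpos
          have hex : ∃ w, ts[i]? = some w ∧ subtermAt w γ = some (var x) := by
            cases h : ts[i]? with
            | none => rw [h] at hpos; simp at hpos
            | some w => rw [h] at hpos; exact ⟨w, rfl, by simpa using hpos⟩
          rw [subst_app, subst_app]
          rw [show replaceAt (app f (ts.map (subst σ))) ((i :: γ) ++ τ') r
              = app f (replaceArg (ts.map (subst σ)) i (γ ++ τ') r) from by rw [List.cons_append, replaceAt]]
          congr 1
          refine replaceArg_map_subst σ x r τ' γ ts i ih ?_ hex
          intro j π w hj hπ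
          have : (j :: π) = i :: γ := by
            refine huniq (j :: π) ?_
            rw [subtermAt_idx, hj]
            simpa using hπ
          simp only [List.cons.injEq] at this
          exact ⟨this.1, this.2⟩

end Update

theorem list_trich : ∀ (p q : List ℕ), p <+: q ∨ q <+: p ∨
    ∃ c a b ta tb, a ≠ b ∧ p = c ++ a :: ta ∧ q = c ++ b :: tb
  | [], q => Or.inl List.nil_prefix
  | p, [] => Or.inr (Or.inl List.nil_prefix)
  | x :: p, y :: q => by
      rcases eq_or_ne x y with rfl | hxy
      · rcases list_trich p q with h | h | ⟨c, a, b, ta, tb, h1, h2, h3⟩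
        · exact Or.inl (List.cons_prefix_cons.2 ⟨rfl, h⟩)
        · exact Or.inr (Or.inl (List.cons_prefix_cons.2 ⟨rfl, h⟩))
        · exact Or.inr (Or.inr ⟨x :: c, a, b, ta, tb, h1, by simp [h2], by simp [h3]⟩)
      · exact Or.inr (Or.inr ⟨[], x, y, p, q, hxy, rfl, rfl⟩)

theorem prefix_or_prefix {p q τ ρ : List ℕ} (h : p ++ τ = q ++ ρ) :
    (∃ γ, q = p ++ γ) ∨ (∃ γ, p = q ++ γ) := by
  rcases list_trich p q with ⟨γ, hγ⟩ | ⟨γ, hγ⟩ | ⟨c, a, b, ta, tb, h1, h2, h3⟩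
  · exact Or.inl ⟨γ, hγ.symm⟩
  · exact Or.inr ⟨γ, hγ.symm⟩
  · subst h2; subst h3
    simp only [List.append_assoc, List.append_cancel_left_eq, List.cons_append,
      List.cons.injEq] at h
    exact absurd h.1 h1

theorem noset_empty (t s : Tm S V) : NOSet t s (∅ : Finset (List ℕ)) :=
  ⟨fun π h => absurd h (by simp), fun π h => absurd h (by simp)⟩

theorem noset_bddAbove (t s : Tm S V) :
    BddAbove {n | ∃ A : Finset (List ℕ), NOSet t s A ∧ A.card = n} := by
  refine ⟨(allPos s).toFinset.card, fun n hn => ?_⟩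
  obtain ⟨A, hA, rfl⟩ := hn
  refine Finset.card_le_card (fun π hπ => ?_)
  obtain ⟨σ, hσ⟩ := hA.1 π hπ
  simpa using mem_allPos s π _ hσ

theorem exists_max_noset (t s : Tm S V) :
    ∃ A : Finset (List ℕ), NOSet t s A ∧ A.card = maxNO t s := by
  have : Set.Nonempty {n | ∃ A : Finset (List ℕ), NOSet t s A ∧ A.card = n} :=
    ⟨0, ∅, noset_empty t s, rfl⟩
  exact Nat.sSup_mem this (noset_bddAbove t s)

theorem card_le_maxNO {t s : Tm S V} {A : Finset (List ℕ)} (h : NOSet t s A) :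
    A.card ≤ maxNO t s :=
  le_csSup (noset_bddAbove t s) ⟨A, h, rfl⟩

end Tm
/-- Let `t` be a linear term and `s = C[tδ]` with the occurrence of `t` at the hole
position `π₁` of `C`, where `π₁` is an innermost occurrence among a maximal set `Sset`
of pairwise non-overlapping occurrences of `t` in `s`. Then for any term `u` with
`V(u) ⊆ V(t)` we have `maxNO(t, C[uδ]) ≥ maxNO(t, u) + maxNO(t, s) − 1`. -/
theorem maxNO_replace_innermost {S V : Type} (t s u : Tm S V) (δ : V → Tm S V)
    (π₁ : List ℕ) (Sset : Finset (List ℕ))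
    (hlin : Tm.Linear t)
    (hNO : Tm.NOSet t s Sset) (hmax : Sset.card = Tm.maxNO t s) (hπ₁ : π₁ ∈ Sset)
    (hocc : Tm.subtermAt s π₁ = some (Tm.subst δ t))
    (hinner : ∀ π ∈ Sset, ∀ τ : List ℕ, π = π₁ ++ τ → τ = [])
    (hu : ∀ x : V, Tm.Occurs x u → Tm.Occurs x t) :
    Tm.maxNO t u + Tm.maxNO t s - 1 ≤
      Tm.maxNO t (Tm.replaceAt s π₁ (Tm.subst δ u)) := by
  classical
  open Tm in
  set r : Tm S V := Tm.subst δ u with hr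
  set s' : Tm S V := Tm.replaceAt s π₁ r with hs'
  obtain ⟨T, hT, hTcard⟩ := Tm.exists_max_noset t u
  set B : Finset (List ℕ) := Sset.erase π₁ ∪ T.image (fun ρ => π₁ ++ ρ) with hB
  -- Matches for old positions
  have hold : ∀ π ∈ Sset, π ≠ π₁ → Tm.Matches t s' π := by
    intro π hπ hne
    obtain ⟨σ, hσ⟩ := hNO.1 π hπ
    rcases Tm.list_trich π π₁ with ⟨τ₀, hτ₀⟩ | ⟨τ, hτ⟩ | ⟨c, a, b, ta, tb, hab, hpa, hpb⟩
    · -- π is a prefix of π₁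
      have hτ₀ne : τ₀ ≠ [] := by
        rintro rfl; exact hne (by simpa using hτ₀)
      have hτ₀pos : Tm.subtermAt (Tm.subst σ t) τ₀ = some (Tm.subst δ t) := by
        have := hocc
        rw [← hτ₀, Tm.subtermAt_append, hσ] at this
        simpa using this
      have hC : Tm.subtermAt s' π = some (Tm.replaceAt (Tm.subst σ t) τ₀ r) := by
        rw [hs', ← hτ₀]
        exact Tm.subtermAt_replaceAt_prefix r τ₀ s π (Tm.subst σ t) hσ
      rcases Tm.subtermAt_subst_cases σ t τ₀ _ hτ₀pos with
        ⟨w', hw', _⟩ | ⟨a, b, x, hab, ha, hb⟩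
      · cases w' with
        | var x =>
            have huniq : ∀ π', Tm.subtermAt t π' = some (Tm.var x) → π' = τ₀ :=
              fun π' h' => hlin x π' τ₀ h' hw'
            have := Tm.replace_subst_var σ x r [] t τ₀ huniq hw'
            rw [List.append_nil] at this
            exact ⟨_, by rw [hC, this]⟩
        | app g ls =>
            exact absurd ⟨τ₀, ⟨g, ls, hw'⟩, Or.inr hτ₀.symm⟩
              (hNO.2 π hπ π₁ hπ₁ hne)
      · have huniq : ∀ π', Tm.subtermAt t π' = some (Tm.var x) → π' = a :=
          fun π' h' => hlin x π' a h' ha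
        have := Tm.replace_subst_var σ x r b t a huniq ha
        rw [← hab] at this
        exact ⟨_, by rw [hC, this]⟩
    · -- π₁ is a prefix of π
      have := hinner π hπ τ hτ.symm
      subst this
      exact absurd (by simpa using hτ.symm) hne
    · -- parallel
      subst hpa; subst hpb
      obtain ⟨w, hw, -⟩ : ∃ w, Tm.subtermAt s c = some w ∧
          Tm.subtermAt w (a :: ta) = some (Tm.subst σ t) := by
        have := hσ
        rw [Tm.subtermAt_append] at this
        cases h : Tm.subtermAt s c with
        | none => rw [h] at this; simp at this
        | some w => rw [h] at this; exact ⟨w, rfl, by simpa using this⟩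
      refine ⟨σ, ?_⟩
      rw [hs', Tm.subtermAt_replaceAt_parallel r (Ne.symm hab) c tb ta s w hw]
      exact hσ
  -- Matches for new positions
  have hnew : ∀ ρ ∈ T, Tm.Matches t s' (π₁ ++ ρ) := by
    intro ρ hρ
    obtain ⟨σ, hσ⟩ := hT.1 ρ hρ
    refine ⟨fun x => Tm.subst δ (σ x), ?_⟩
    rw [hs', Tm.subtermAt_replaceAt_append r ρ s π₁ _ hocc, hr,
      Tm.subtermAt_subst δ u ρ _ hσ, Tm.subst_subst]
  -- non-overlap between an old position and a new position
  have hmix : ∀ π ∈ Sset, π ≠ π₁ → ∀ ρ ∈ T, ¬ Tm.Overlap t π (π₁ ++ ρ) := by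
    intro π hπ hne ρ hρ
    rintro ⟨τ, happ, h | h⟩
    · have : ρ ++ τ = [] := hinner π hπ (ρ ++ τ) (by simp [h])
      have hρnil : ρ = [] := by simpa using (List.append_eq_nil_iff.1 this).1
      have hτnil : τ = [] := by simpa using (List.append_eq_nil_iff.1 this).2
      subst hρnil; subst hτnil
      exact hne (by simpa using h)
    · -- π₁ ++ ρ = π ++ τ
      rcases Tm.prefix_or_prefix h.symm with ⟨τ₀, hτ₀⟩ | ⟨γ, hγ⟩
      · -- π₁ = π ++ τ₀
        have hτ₀ne : τ₀ ≠ [] := by rintro rfl; exact hne (by simpa using hτ₀.symm)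
        have hτeq : τ = τ₀ ++ ρ := by
          have : π ++ τ = π ++ (τ₀ ++ ρ) := by
            rw [← List.append_assoc, ← hτ₀]; exact h.symm
          simpa using this
        obtain ⟨g, ls, hgl⟩ := happ
        rw [hτeq, Tm.subtermAt_append] at hgl
        obtain ⟨w, hw1, hw2⟩ : ∃ w, Tm.subtermAt t τ₀ = some w ∧
            Tm.subtermAt w ρ = some (Tm.app g ls) := by
          cases hq : Tm.subtermAt t τ₀ with
          | none => rw [hq] at hgl; simp at hgl
          | some w => rw [hq] at hgl; exact ⟨w, rfl, by simpa using hgl⟩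
        cases w with
        | var x =>
            cases ρ with
            | nil => simp [Tm.subtermAt] at hw2
            | cons i ρ' => simp [Tm.subtermAt] at hw2
        | app g' ls' =>
            exact absurd ⟨τ₀, ⟨g', ls', hw1⟩, Or.inr hτ₀⟩ (hNO.2 π hπ π₁ hπ₁ hne)
      · -- π = π₁ ++ γ
        have := hinner π hπ γ hγ
        subst this
        exact hne (by simpa using hγ)
  -- B is a non-overlapping set of occurrences in s'
  have hBno : Tm.NOSet t s' B := by
    constructor
    · intro π hπ
      rcases Finset.mem_union.1 hπ with h | h
      · exact hold π (Finset.mem_of_mem_erase h) (Finset.ne_of_mem_erase h)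
      · obtain ⟨ρ, hρ, rfl⟩ := Finset.mem_image.1 h
        exact hnew ρ hρ
    · intro p hp q hq hpq
      have swap : ∀ a b : List ℕ, Tm.Overlap t a b → Tm.Overlap t b a := by
        rintro a b ⟨τ, h1, h2⟩; exact ⟨τ, h1, h2.symm⟩
      rcases Finset.mem_union.1 hp with h1 | h1 <;> rcases Finset.mem_union.1 hq with h2 | h2
      · exact hNO.2 p (Finset.mem_of_mem_erase h1) q (Finset.mem_of_mem_erase h2) hpq
      · obtain ⟨ρ, hρ, rfl⟩ := Finset.mem_image.1 h2
        exact hmix p (Finset.mem_of_mem_erase h1) (Finset.ne_of_mem_erase h1) ρ hρ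
      · obtain ⟨ρ, hρ, rfl⟩ := Finset.mem_image.1 h1
        exact fun hov => hmix q (Finset.mem_of_mem_erase h2) (Finset.ne_of_mem_erase h2) ρ hρ
          (swap _ _ hov)
      · obtain ⟨ρ₁, hρ₁, rfl⟩ := Finset.mem_image.1 h1
        obtain ⟨ρ₂, hρ₂, rfl⟩ := Finset.mem_image.1 h2
        have hρne : ρ₁ ≠ ρ₂ := fun hh => hpq (by rw [hh])
        rintro ⟨τ, happ, h | h⟩
        · rw [List.append_assoc, List.append_cancel_left_eq] at h
          exact hT.2 ρ₁ hρ₁ ρ₂ hρ₂ hρne ⟨τ, happ, Or.inl h⟩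
        · rw [List.append_assoc, List.append_cancel_left_eq] at h
          exact hT.2 ρ₁ hρ₁ ρ₂ hρ₂ hρne ⟨τ, happ, Or.inr h⟩
  -- cardinality of B
  have hdisj : Disjoint (Sset.erase π₁) (T.image (fun ρ => π₁ ++ ρ)) := by
    rw [Finset.disjoint_left]
    intro p hp1 hp2
    obtain ⟨ρ, hρ, rfl⟩ := Finset.mem_image.1 hp2
    have : ρ = [] := hinner (π₁ ++ ρ) (Finset.mem_of_mem_erase hp1) ρ rfl
    subst this
    exact Finset.notMem_erase π₁ Sset (by simpa using hp1)
  have hBcard : B.card = (Sset.card - 1) + T.card := by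
    rw [hB, Finset.card_union_of_disjoint hdisj, Finset.card_erase_of_mem hπ₁,
      Finset.card_image_of_injective _ (fun ρ₁ ρ₂ hh => by simpa using hh)]
  have hle : B.card ≤ Tm.maxNO t s' := Tm.card_le_maxNO hBno
  have hpos : 1 ≤ Sset.card := Finset.card_pos.2 ⟨π₁, hπ₁⟩
  omega
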